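/- Let f : [q]^n → {0,1} be 0-monotone, μ' a probability measure on [q] with μ'(0) = 0, and μ_h = (1-h)μ' + h δ_0 applied as a product measure on [q]^n. Then the derivative at h = 0 of h ↦ E_{μ_h^{⊗n}}[f] is at least the sum over i of the influences I_{μ'}^i(f) = E_{μ'^{⊗n}}[Var(f | all coordinates except i)]. -/

import Mathlib

open Finset

/-- Pointwise variance inequality for a `{0,1}`-valued `g` dominated by `g 0`. -/
lemma russo_aux1 {q : ℕ} (hq : 0 < q) (μ' : Fin q → ℝ) (hμ0 : ∀ a, 0 ≤ μ' a)
    (hμ1 : ∑ a, μ' a = 1) (g : Fin q → ℝ) (hg01 : ∀ a, g a = 0 ∨ g a = 1)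
    (hg : ∀ a, g a ≤ g ⟨0, hq⟩) :
    (∑ a, μ' a * (g a) ^ 2) - (∑ a, μ' a * g a) ^ 2 ≤ g ⟨0, hq⟩ - ∑ a, μ' a * g a := by
  have hsq : ∀ a, (g a) ^ 2 = g a := by
    intro a; rcases hg01 a with h | h <;> rw [h] <;> ring
  simp only [hsq]
  set p := ∑ a, μ' a * g a with hp
  have hp0 : 0 ≤ p := by
    apply Finset.sum_nonneg
    intro a _
    rcases hg01 a with h | h <;> rw [h] <;> simp [hμ0 a]
  rcases hg01 ⟨0, hq⟩ with h0 | h0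
  · have hz : ∀ a, g a = 0 := by
      intro a
      rcases hg01 a with h | h
      · exact h
      · exfalso; have := hg a; rw [h, h0] at this; linarith
    have : p = 0 := by rw [hp]; apply Finset.sum_eq_zero; intro a _; rw [hz a]; ring
    rw [this, h0]; norm_num
  · rw [h0]; nlinarith [sq_nonneg (1 - p)]

/-- Per-coordinate inequality: influence at `i` is at most the `i`-part of the derivative. -/
lemma russo_key (q n : ℕ) (hq : 0 < q)
    (f : (Fin n → Fin q) → ℝ) (hf01 : ∀ x, f x = 0 ∨ f x = 1)
    (hmono : ∀ x y : Fin n → Fin q, (∀ i, y i = x i ∨ y i = ⟨0, hq⟩) → f x ≤ f y)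
    (μ' : Fin q → ℝ) (hμ0 : ∀ a, 0 ≤ μ' a) (hμ1 : ∑ a, μ' a = 1) (i : Fin n) :
    ∑ x : Fin n → Fin q, (∏ j, μ' (x j)) *
        ((∑ a, μ' a * (f (Function.update x i a)) ^ 2) -
          (∑ a, μ' a * f (Function.update x i a)) ^ 2)
      ≤ ∑ x : Fin n → Fin q,
          ((∏ j ∈ univ.erase i, μ' (x j)) *
            ((if x i = ⟨0, hq⟩ then (1:ℝ) else 0) - μ' (x i))) * f x := by
  classical
  set e := Equiv.funSplitAt i (Fin q) with he
  -- basic computations about `e.symm`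
  have hyi : ∀ (a : Fin q) (y : {j // j ≠ i} → Fin q), e.symm (a, y) i = a := by
    intro a y; simp [he, Equiv.funSplitAt_symm_apply]
  have hyj : ∀ (a : Fin q) (y : {j // j ≠ i} → Fin q) (j : Fin n) (h : j ≠ i),
      e.symm (a, y) j = y ⟨j, h⟩ := by
    intro a y j h; simp [he, Equiv.funSplitAt_symm_apply, h]
  have hupd : ∀ (a b : Fin q) (y : {j // j ≠ i} → Fin q),
      Function.update (e.symm (b, y)) i a = e.symm (a, y) := by
    intro a b y
    funext j
    by_cases h : j = i
    · subst h; rw [Function.update_self, hyi]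
    · rw [Function.update_of_ne h, hyj b y j h, hyj a y j h]
  set g : ({j // j ≠ i} → Fin q) → Fin q → ℝ := fun y a => f (e.symm (a, y)) with hgdef
  set Q : ({j // j ≠ i} → Fin q) → ℝ :=
    fun y => ∏ j ∈ univ.erase i, μ' (e.symm ((⟨0, hq⟩ : Fin q), y) j) with hQdef
  have hQeq : ∀ (a : Fin q) (y : {j // j ≠ i} → Fin q),
      ∏ j ∈ univ.erase i, μ' (e.symm (a, y) j) = Q y := by
    intro a y
    apply Finset.prod_congr rfl
    intro j hj
    have hji : j ≠ i := Finset.ne_of_mem_erase hj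
    rw [hyj a y j hji, hyj _ y j hji]
  have hQ0 : ∀ y, 0 ≤ Q y := by
    intro y; apply Finset.prod_nonneg; intro j _; exact hμ0 _
  have hPeq : ∀ (a : Fin q) (y : {j // j ≠ i} → Fin q),
      ∏ j, μ' (e.symm (a, y) j) = μ' a * Q y := by
    intro a y
    rw [← Finset.mul_prod_erase _ _ (Finset.mem_univ i), hyi, hQeq]
  have trans : ∀ F : (Fin n → Fin q) → ℝ,
      ∑ x : Fin n → Fin q, F x
        = ∑ a : Fin q, ∑ y : {j // j ≠ i} → Fin q, F (e.symm (a, y)) := by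
    intro F
    rw [← Equiv.sum_comp e.symm F, Fintype.sum_prod_type]
  -- rewrite LHS
  have hL : ∑ x : Fin n → Fin q, (∏ j, μ' (x j)) *
        ((∑ a, μ' a * (f (Function.update x i a)) ^ 2) -
          (∑ a, μ' a * f (Function.update x i a)) ^ 2)
      = ∑ y : {j // j ≠ i} → Fin q, Q y *
          ((∑ a, μ' a * (g y a) ^ 2) - (∑ a, μ' a * g y a) ^ 2) := by
    rw [trans]
    rw [Finset.sum_comm]
    refine Finset.sum_congr rfl fun y _ => ?_
    have hterm : ∀ a : Fin q,
        (∏ j, μ' (e.symm (a, y) j)) *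
          ((∑ b, μ' b * (f (Function.update (e.symm (a, y)) i b)) ^ 2) -
            (∑ b, μ' b * f (Function.update (e.symm (a, y)) i b)) ^ 2)
        = μ' a * (Q y * ((∑ b, μ' b * (g y b) ^ 2) - (∑ b, μ' b * g y b) ^ 2)) := by
      intro a
      have : ∀ b : Fin q, f (Function.update (e.symm (a, y)) i b) = g y b := by
        intro b; rw [hupd b a y]
      simp only [this, hPeq a y]
      ring
    rw [Finset.sum_congr rfl (fun a _ => hterm a), ← Finset.sum_mul, hμ1, one_mul]
  -- rewrite RHS
  have hR : ∑ x : Fin n → Fin q,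
          ((∏ j ∈ univ.erase i, μ' (x j)) *
            ((if x i = ⟨0, hq⟩ then (1:ℝ) else 0) - μ' (x i))) * f x
      = ∑ y : {j // j ≠ i} → Fin q, Q y *
          (g y ⟨0, hq⟩ - ∑ a, μ' a * g y a) := by
    rw [trans]
    rw [Finset.sum_comm]
    refine Finset.sum_congr rfl fun y _ => ?_
    have hterm : ∀ a : Fin q,
        ((∏ j ∈ univ.erase i, μ' (e.symm (a, y) j)) *
            ((if e.symm (a, y) i = ⟨0, hq⟩ then (1:ℝ) else 0) - μ' (e.symm (a, y) i))) *
          f (e.symm (a, y))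
        = Q y * (((if a = ⟨0, hq⟩ then (1:ℝ) else 0) - μ' a) * g y a) := by
      intro a
      rw [hQeq a y, hyi a y]
      ring
    rw [Finset.sum_congr rfl (fun a _ => hterm a), ← Finset.mul_sum]
    congr 1
    have : ∀ a : Fin q,
        ((if a = ⟨0, hq⟩ then (1:ℝ) else 0) - μ' a) * g y a
        = (if a = ⟨0, hq⟩ then g y a else 0) - μ' a * g y a := by
      intro a; by_cases h : a = ⟨0, hq⟩ <;> simp [h] <;> ring
    rw [Finset.sum_congr rfl (fun a _ => this a), Finset.sum_sub_distrib,
      Finset.sum_ite_eq' univ (⟨0, hq⟩ : Fin q) (g y)]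
    simp
  rw [hL, hR]
  apply Finset.sum_le_sum
  intro y _
  apply mul_le_mul_of_nonneg_left _ (hQ0 y)
  apply russo_aux1 hq μ' hμ0 hμ1 (g y) (fun a => hf01 _)
  intro a
  apply hmono
  intro j
  by_cases h : j = i
  · subst h; right; exact hyi _ y
  · left; rw [hyj _ y j h, hyj _ y j h]

/-- Russo-type formula. For a `0`-monotone `f : [q]^n → {0,1}`,
`μ'` a probability measure on `[q]` with `μ'(0) = 0` and `μ_h = (1-h)μ' + h δ_0`,
the derivative at `h = 0` of `h ↦ E_{μ_h^{⊗n}}[f]` is at least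
`∑ i, I_{μ'}^i(f)`, where `I_{μ'}^i(f) = E_{μ'^{⊗n}}[Var(f | coordinates ≠ i)]`. -/
theorem russo_formula (q n : ℕ) (hq : 0 < q)
    (f : (Fin n → Fin q) → ℝ) (hf01 : ∀ x, f x = 0 ∨ f x = 1)
    (hmono : ∀ x y : Fin n → Fin q, (∀ i, y i = x i ∨ y i = ⟨0, hq⟩) → f x ≤ f y)
    (μ' : Fin q → ℝ) (hμ0 : ∀ a, 0 ≤ μ' a) (hμ1 : ∑ a, μ' a = 1)
    (hμz : μ' ⟨0, hq⟩ = 0)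
    (D : ℝ)
    (hD : HasDerivAt
      (fun h : ℝ => ∑ x : Fin n → Fin q,
        (∏ i, ((1 - h) * μ' (x i) + h * (if x i = ⟨0, hq⟩ then 1 else 0))) * f x) D 0) :
    ∑ i : Fin n, ∑ x : Fin n → Fin q, (∏ j, μ' (x j)) *
        ((∑ a, μ' a * (f (Function.update x i a)) ^ 2) -
          (∑ a, μ' a * f (Function.update x i a)) ^ 2)
      ≤ D := by
  classical
  -- compute the derivative explicitly
  have hfac : ∀ (x : Fin n → Fin q) (j : Fin n),
      HasDerivAt (fun h : ℝ => (1 - h) * μ' (x j) + h * (if x j = ⟨0, hq⟩ then 1 else 0))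
        ((if x j = ⟨0, hq⟩ then (1:ℝ) else 0) - μ' (x j)) 0 := by
    intro x j
    have h1 : HasDerivAt (fun h : ℝ => (1 - h) * μ' (x j)) (-μ' (x j)) 0 := by
      simpa using ((hasDerivAt_id (0:ℝ)).const_sub 1).mul_const (μ' (x j))
    have h2 : HasDerivAt (fun h : ℝ => h * (if x j = ⟨0, hq⟩ then (1:ℝ) else 0))
        ((if x j = ⟨0, hq⟩ then (1:ℝ) else 0)) 0 := by
      simpa using (hasDerivAt_id (0:ℝ)).mul_const ((if x j = ⟨0, hq⟩ then (1:ℝ) else 0))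
    have := h1.add h2
    exact this.congr_deriv (by ring)
  have hterm : ∀ x : Fin n → Fin q,
      HasDerivAt (fun h : ℝ =>
          (∏ i, ((1 - h) * μ' (x i) + h * (if x i = ⟨0, hq⟩ then 1 else 0))) * f x)
        ((∑ i, (∏ j ∈ univ.erase i, μ' (x j)) *
            ((if x i = ⟨0, hq⟩ then (1:ℝ) else 0) - μ' (x i))) * f x) 0 := by
    intro x
    have hprod := HasDerivAt.fun_finsetProd (u := univ) (fun j _ => hfac x j)
    have hval : ∀ j : Fin n,
        (fun h : ℝ => (1 - h) * μ' (x j) + h * (if x j = ⟨0, hq⟩ then (1:ℝ) else 0)) 0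
          = μ' (x j) := by
      intro j; simp
    have := hprod.mul_const (f x)
    refine this.congr_deriv (Eq.symm ?_)
    congr 1
    refine Finset.sum_congr rfl fun i _ => ?_
    rw [smul_eq_mul]
    congr 1
    exact Finset.prod_congr rfl fun j _ => (hval j).symm
  have hD' := HasDerivAt.fun_sum (u := (univ : Finset (Fin n → Fin q)))
    (fun x _ => hterm x)
  have hDeq : D = ∑ x : Fin n → Fin q,
      (∑ i, (∏ j ∈ univ.erase i, μ' (x j)) *
          ((if x i = ⟨0, hq⟩ then (1:ℝ) else 0) - μ' (x i))) * f x :=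
    hD.unique hD'
  rw [hDeq]
  have : ∑ x : Fin n → Fin q,
      (∑ i, (∏ j ∈ univ.erase i, μ' (x j)) *
          ((if x i = ⟨0, hq⟩ then (1:ℝ) else 0) - μ' (x i))) * f x
      = ∑ i : Fin n, ∑ x : Fin n → Fin q,
          ((∏ j ∈ univ.erase i, μ' (x j)) *
            ((if x i = ⟨0, hq⟩ then (1:ℝ) else 0) - μ' (x i))) * f x := by
    rw [Finset.sum_comm]
    exact Finset.sum_congr rfl fun x _ => Finset.sum_mul _ _ _
  rw [this]
  exact Finset.sum_le_sum fun i _ =>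
    russo_key q n hq f hf01 hmono μ' hμ0 hμ1 i
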